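/- Let p be a prime number, let ζ ∈ ℂ be a primitive p-th root of unity, and let c : ℤ → ℤ be a function with c(n) = 0 for all n < −2 and c(−2) = 1. In the field ℂ((t)) of formal Laurent series, set x = Σ_{n ≥ −2} c(n)·t^{p·n}; for each integer b with 0 ≤ b < p set f_b = Σ_{n ≥ −2} c(n)·ζ^{b·n}·t^{n}; and set f_∞ = Σ_{n ≥ −2} c(n)·t^{p²·n}. Then the Laurent series F = (x − f_∞)·∏_{b=0}^{p−1} (x − f_b) is nonzero, the smallest exponent k for which the coefficient of t^k in F is nonzero equals −4p², and the coefficient of t^{−4p²} in F equals −1. -/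

import Mathlib

private lemma order_eq_of_coeff {a : LaurentSeries ℂ} {n : ℤ} (hn : a.coeff n ≠ 0)
    (h0 : ∀ k : ℤ, k < n → a.coeff k = 0) : a ≠ 0 ∧ a.order = n := by
  have ha : a ≠ 0 := fun h => hn (by simp [h])
  refine ⟨ha, le_antisymm (HahnSeries.order_le_of_coeff_ne_zero hn) ?_⟩
  by_contra h
  push_neg at h
  exact ha (HahnSeries.coeff_order_eq_zero.mp (h0 _ h))

private lemma lc_mul {a b : LaurentSeries ℂ} (ha : a ≠ 0) (hb : b ≠ 0) :
    (a * b).leadingCoeff = a.leadingCoeff * b.leadingCoeff := by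
  rw [HahnSeries.leadingCoeff_eq, HahnSeries.order_mul ha hb,
    HahnSeries.coeff_mul_order_add_order, HahnSeries.leadingCoeff_eq, HahnSeries.leadingCoeff_eq]

/-- Let `p` be a prime, `ζ` a primitive `p`-th root of unity, and `c : ℤ → ℤ` with
`c(n) = 0` for `n < -2` and `c(-2) = 1`.  With `x = Σ_{n ≥ -2} c(n) t^{p n}`,
`f_b = Σ_{n ≥ -2} c(n) ζ^{b n} t^n` for `0 ≤ b < p`, and `f_∞ = Σ_{n ≥ -2} c(n) t^{p² n}`
in `ℂ((t))`, the Laurent series `F = (x - f_∞) · ∏_{b=0}^{p-1} (x - f_b)` is nonzero, its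
order (least exponent with nonzero coefficient) is `-4p²`, and its coefficient at
`t^{-4p²}` is `-1`. -/
theorem modular_product_at_x_order (p : ℕ) (hp : p.Prime) (ζ : ℂ)
    (hζ : IsPrimitiveRoot ζ p) (c : ℤ → ℤ) (hc : ∀ n : ℤ, n < -2 → c n = 0)
    (hc2 : c (-2) = 1)
    (x finf : LaurentSeries ℂ) (f : ℕ → LaurentSeries ℂ)
    (hx : ∀ k : ℤ, x.coeff k = if (p : ℤ) ∣ k then (c (k / (p : ℤ)) : ℂ) else 0)
    (hf : ∀ b : ℕ, b < p → ∀ k : ℤ, (f b).coeff k = (c k : ℂ) * ζ ^ ((b : ℤ) * k))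
    (hfinf : ∀ k : ℤ, finf.coeff k =
      if ((p : ℤ) ^ 2 ∣ k) then (c (k / (p : ℤ) ^ 2) : ℂ) else 0) :
    (x - finf) * ∏ b ∈ Finset.range p, (x - f b) ≠ 0 ∧
    ((x - finf) * ∏ b ∈ Finset.range p, (x - f b)).order = -(4 * (p : ℤ) ^ 2) ∧
    ((x - finf) * ∏ b ∈ Finset.range p, (x - f b)).coeff (-(4 * (p : ℤ) ^ 2)) = -1 := by
  have hp2 : (2 : ℤ) ≤ (p : ℤ) := by exact_mod_cast hp.two_le
  have hp0 : (0 : ℤ) < (p : ℤ) := by linarith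
  have hpne : (p : ℤ) ≠ 0 := ne_of_gt hp0
  -- x vanishes below -2p
  have hxz : ∀ k : ℤ, k < -(2 * (p : ℤ)) → x.coeff k = 0 := by
    intro k hk
    rw [hx]
    split_ifs with h
    · obtain ⟨m, rfl⟩ := h
      rw [Int.mul_ediv_cancel_left _ hpne]
      have hm : m < -2 := by
        have : (p : ℤ) * m < (p : ℤ) * (-2) := by linarith
        exact lt_of_mul_lt_mul_left this hp0.le
      rw [hc m hm]; norm_num
    · rfl
  -- finf vanishes below -2p²
  have hfinfz : ∀ k : ℤ, k < -(2 * (p : ℤ) ^ 2) → finf.coeff k = 0 := by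
    intro k hk
    rw [hfinf]
    split_ifs with h
    · obtain ⟨m, rfl⟩ := h
      rw [Int.mul_ediv_cancel_left _ (pow_ne_zero 2 hpne)]
      have hsq : (0 : ℤ) < (p : ℤ) ^ 2 := by positivity
      have hm : m < -2 := by
        have : (p : ℤ) ^ 2 * m < (p : ℤ) ^ 2 * (-2) := by linarith
        exact lt_of_mul_lt_mul_left this hsq.le
      rw [hc m hm]; norm_num
    · rfl
  -- x coeff at -2p²  is 0
  have hx2p2 : x.coeff (-(2 * (p : ℤ) ^ 2)) = 0 := by
    rw [hx, if_pos ⟨-(2 * (p : ℤ)), by ring⟩,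
      show -(2 * (p : ℤ) ^ 2) = (p : ℤ) * (-(2 * (p : ℤ))) by ring,
      Int.mul_ediv_cancel_left _ hpne, hc (-(2 * (p : ℤ))) (by linarith)]
    norm_num
  -- finf coeff at -2p² is 1
  have hfinf2 : finf.coeff (-(2 * (p : ℤ) ^ 2)) = 1 := by
    rw [hfinf, if_pos ⟨-2, by ring⟩,
      show -(2 * (p : ℤ) ^ 2) = (p : ℤ) ^ 2 * (-2) by ring,
      Int.mul_ediv_cancel_left _ (pow_ne_zero 2 hpne), hc2]
    norm_num
  -- the first factor g = x - finf
  have hg1 : (x - finf).coeff (-(2 * (p : ℤ) ^ 2)) = -1 := by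
    rw [HahnSeries.coeff_sub, hx2p2, hfinf2]; ring
  have hg0 : ∀ k : ℤ, k < -(2 * (p : ℤ) ^ 2) → (x - finf).coeff k = 0 := by
    intro k hk
    have hk' : k < -(2 * (p : ℤ)) := by nlinarith
    rw [HahnSeries.coeff_sub, hxz k hk', hfinfz k hk, sub_zero]
  obtain ⟨hgne, hgord⟩ := order_eq_of_coeff (by rw [hg1]; norm_num) hg0
  have hglc : (x - finf).leadingCoeff = -1 := by
    rw [HahnSeries.leadingCoeff_eq, hgord, hg1]
  -- each factor x - f b
  have hfac : ∀ b : ℕ, b < p → (x - f b) ≠ 0 ∧ (x - f b).order = -(2 * (p : ℤ)) ∧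
      (x - f b).leadingCoeff = 1 := by
    intro b hb
    have h1 : (x - f b).coeff (-(2 * (p : ℤ))) = 1 := by
      rw [HahnSeries.coeff_sub, hf b hb, hc (-(2 * (p : ℤ))) (by linarith), hx,
        if_pos ⟨-2, by ring⟩, show -(2 * (p : ℤ)) = (p : ℤ) * (-2) by ring,
        Int.mul_ediv_cancel_left _ hpne, hc2]
      norm_num
    have h0 : ∀ k : ℤ, k < -(2 * (p : ℤ)) → (x - f b).coeff k = 0 := by
      intro k hk
      have hk2 : k < -2 := by linarith
      rw [HahnSeries.coeff_sub, hxz k hk, hf b hb, hc k hk2]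
      norm_num
    obtain ⟨hne, hord⟩ := order_eq_of_coeff (by rw [h1]; norm_num) h0
    exact ⟨hne, hord, by rw [HahnSeries.leadingCoeff_eq, hord, h1]⟩
  -- the product over any subset of range p
  have hprod : ∀ s : Finset ℕ, (∀ b ∈ s, b < p) →
      (∏ b ∈ s, (x - f b)) ≠ 0 ∧
      (∏ b ∈ s, (x - f b)).order = (s.card : ℤ) * (-(2 * (p : ℤ))) ∧
      (∏ b ∈ s, (x - f b)).leadingCoeff = 1 := by
    intro s
    induction s using Finset.induction_on with
    | empty =>
      intro _
      simp [HahnSeries.order_one, HahnSeries.leadingCoeff_eq]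
    | @insert a s ha ih =>
      intro hsub
      obtain ⟨hne, hord, hlc⟩ := hfac a (hsub a (Finset.mem_insert_self a s))
      obtain ⟨Pne, Pord, Plc⟩ := ih (fun b hb => hsub b (Finset.mem_insert_of_mem hb))
      rw [Finset.prod_insert ha]
      refine ⟨mul_ne_zero hne Pne, ?_, ?_⟩
      · rw [HahnSeries.order_mul hne Pne, hord, Pord, Finset.card_insert_of_notMem ha]
        push_cast; ring
      · rw [lc_mul hne Pne, hlc, Plc, one_mul]
  obtain ⟨Pne, Pord, Plc⟩ := hprod (Finset.range p) (fun b hb => Finset.mem_range.mp hb)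
  rw [Finset.card_range] at Pord
  have hFne : (x - finf) * ∏ b ∈ Finset.range p, (x - f b) ≠ 0 := mul_ne_zero hgne Pne
  have hordsum : (x - finf).order + (∏ b ∈ Finset.range p, (x - f b)).order
      = -(4 * (p : ℤ) ^ 2) := by
    rw [hgord, Pord]; ring
  refine ⟨hFne, ?_, ?_⟩
  · rw [HahnSeries.order_mul hgne Pne, hordsum]
  · rw [← hordsum, HahnSeries.coeff_mul_order_add_order, hglc, Plc]
    ring
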